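/- Let $q$ be a squarefree positive integer, $\chi$ a primitive Dirichlet character modulo $q$, and write $d = \gcd(h, q)$, $q = de$ for an integer $h$. Factor $\chi = \chi_d \chi_e$ with $\chi_d, \chi_e$ primitive modulo $d$ and $e$ respectively. Then for any finite interval $I$ of integers, $\left| \sum_{n \in I} \chi(n) \overline{\chi(n+h)} \right| \leq \sum_{d' \mid d} \left| \sum_{n \in I/d'} \chi_e(n) \overline{\chi_e(n + \overline{d'} h)} \right|$, where $I/d' = \{ m : d' m \in I \}$ and $\overline{d'} d' \equiv 1 \pmod e$. -/

import Mathlib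

open Finset

section Helpers
open ArithmeticFunction
open scoped ArithmeticFunction.Moebius ArithmeticFunction.zeta

theorem moebius_sum_div' (n : ℕ) : ∑ d ∈ n.divisors, (μ d : ℤ) = if n = 1 then 1 else 0 := by
  have := congrArg (fun f : ArithmeticFunction ℤ => f n) moebius_mul_coe_zeta
  simp only [mul_apply, one_apply] at this
  rw [Nat.sum_divisorsAntidiagonal (fun x y => μ x * (ζ : ArithmeticFunction ℤ) y)] at this
  rw [← this]
  rcases eq_or_ne n 0 with rfl | hn
  · simp
  · refine Finset.sum_congr rfl fun i hi => ?_
    have h2 : n / i ≠ 0 := Nat.div_ne_zero_iff.mpr ⟨(Nat.pos_of_mem_divisors hi).ne',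
      (Nat.le_of_dvd (Nat.pos_of_ne_zero hn) (Nat.dvd_of_mem_divisors hi))⟩
    simp [natCoe_apply, zeta_apply, h2]

open scoped Classical in
theorem indicator_moebius' (d : ℕ) (hd : d ≠ 0) (n : ℤ) :
    (if IsUnit ((n : ZMod d)) then (1:ℂ) else 0)
      = ∑ d' ∈ d.divisors, (μ d' : ℂ) * (if (d' : ℤ) ∣ n then 1 else 0) := by
  have hcn : ((n : ZMod d)) = ((n.natAbs : ZMod d)) ∨ ((n : ZMod d)) = -(n.natAbs : ZMod d) := by
    rcases Int.natAbs_eq n with he | he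
    · left; conv_lhs => rw [he]
      rw [Int.cast_natCast]
    · right; conv_lhs => rw [he]
      rw [Int.cast_neg, Int.cast_natCast]
  have hu : IsUnit ((n : ZMod d)) ↔ Nat.gcd n.natAbs d = 1 := by
    rcases hcn with hc | hc
    · rw [hc]; exact ZMod.isUnit_iff_coprime _ d
    · rw [hc, IsUnit.neg_iff]; exact ZMod.isUnit_iff_coprime _ d
  have hdvd : ∀ d' : ℕ, ((d' : ℤ) ∣ n ↔ d' ∣ n.natAbs) := fun d' => by
    rw [← Int.dvd_natAbs, Int.natCast_dvd_natCast]
  set g := Nat.gcd n.natAbs d with hg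
  have hg0 : g ≠ 0 := Nat.gcd_ne_zero_right hd
  have hfil : d.divisors.filter (fun d' : ℕ => (d' : ℤ) ∣ n) = g.divisors := by
    ext d'
    simp only [Finset.mem_filter, Nat.mem_divisors, hdvd d']
    constructor
    · rintro ⟨⟨h1, _⟩, h2⟩
      exact ⟨Nat.dvd_gcd h2 h1, hg0⟩
    · rintro ⟨h1, _⟩
      exact ⟨⟨h1.trans (Nat.gcd_dvd_right _ _), hd⟩, h1.trans (Nat.gcd_dvd_left _ _)⟩
  simp only [mul_ite, mul_one, mul_zero]
  rw [← Finset.sum_filter, hfil]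
  rw [← Int.cast_sum, moebius_sum_div' g]
  by_cases hc : g = 1 <;> simp [hu, hc]

end Helpers

/-- Reduction to coprime shifts: for `q` squarefree, `χ` primitive mod `q`,
`d = gcd(h,q)`, `q = de`, and the factorization `χ = χ_d χ_e` into primitive
characters mod `d` and mod `e`,
`|∑_{n∈I} χ(n) conj χ(n+h)| ≤ ∑_{d'∣d} |∑_{m∈I/d'} χ_e(m) conj χ_e(m + d̄'h)|`,
where `I/d' = {m : d'm ∈ I}` and `d̄'d' ≡ 1 (mod e)`. -/
theorem shifted_char_sum_gcd_reduction
    (q : ℕ) (hq : 0 < q) (hsf : Squarefree q)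
    (χ : DirichletCharacter ℂ q) (hχ : χ.IsPrimitive)
    (h : ℤ) (d e : ℕ) (hd : d = Int.gcd h q) (hde : q = d * e)
    (χd : DirichletCharacter ℂ d) (hχd : χd.IsPrimitive)
    (χe : DirichletCharacter ℂ e) (hχe : χe.IsPrimitive)
    (hfac : ∀ n : ℤ, χ (n : ZMod q) = χd (n : ZMod d) * χe (n : ZMod e))
    (a b : ℤ) (J : ℕ → Finset ℤ)
    (hJ : ∀ d' ∈ d.divisors, ∀ m : ℤ, m ∈ J d' ↔ (d' : ℤ) * m ∈ Finset.Icc a b) :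
    ‖∑ n ∈ Finset.Icc a b,
        χ (n : ZMod q) * (starRingEnd ℂ) (χ ((n + h : ℤ) : ZMod q))‖ ≤
      ∑ d' ∈ d.divisors,
        ‖∑ m ∈ J d',
            χe (m : ZMod e) *
              (starRingEnd ℂ) (χe ((m : ZMod e) + ((d' : ZMod e))⁻¹ * (h : ZMod e)))‖ := by
  open ArithmeticFunction ArithmeticFunction.Moebius in
  classical
  have hd0 : d ≠ 0 := by
    rw [hd]
    intro hz
    rw [Int.gcd_eq_zero_iff] at hz
    exact hq.ne' (by exact_mod_cast hz.2)
  have he0 : e ≠ 0 := by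
    rintro rfl
    rw [hde, mul_zero] at hq
    exact lt_irrefl 0 hq
  have hcop : Nat.Coprime d e := Nat.coprime_of_squarefree_mul (hde ▸ hsf)
  have hdh : (d : ℤ) ∣ h := hd ▸ Int.gcd_dvd_left h (q : ℤ)
  -- unit-norm-squared helper
  have hnorm1 : ∀ (m : ℕ) (ψ : DirichletCharacter ℂ m) (x : ZMod m), IsUnit x →
      ψ x * (starRingEnd ℂ) (ψ x) = 1 := by
    intro m ψ x hx
    rw [Complex.mul_conj]
    have : ‖ψ x‖ = 1 := by
      have := ψ.unit_norm_eq_one hx.unit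
      simpa using this
    rw [Complex.normSq_eq_norm_sq]
    rw [this]
    norm_num
  set fe : ℤ → ℂ := fun n => χe (n : ZMod e) * (starRingEnd ℂ) (χe ((n + h : ℤ) : ZMod e))
    with hfe
  -- Step A
  have stepA : ∀ n : ℤ, χ (n : ZMod q) * (starRingEnd ℂ) (χ ((n + h : ℤ) : ZMod q))
      = (if IsUnit ((n : ZMod d)) then (1:ℂ) else 0) * fe n := by
    intro n
    rw [hfac n, hfac (n + h)]
    have hdd : ((n + h : ℤ) : ZMod d) = (n : ZMod d) := by
      push_cast
      rw [(ZMod.intCast_zmod_eq_zero_iff_dvd h d).mpr hdh, add_zero]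
    rw [hdd, map_mul]
    have : χd (n : ZMod d) * χe (n : ZMod e) *
        ((starRingEnd ℂ) (χd (n : ZMod d)) * (starRingEnd ℂ) (χe ((n + h : ℤ) : ZMod e)))
        = (χd (n : ZMod d) * (starRingEnd ℂ) (χd (n : ZMod d))) * fe n := by
      rw [hfe]; ring
    rw [this]
    by_cases hun : IsUnit ((n : ZMod d))
    · rw [hnorm1 d χd _ hun, if_pos hun]
    · rw [χd.map_nonunit hun, if_neg hun]
      simp
  -- rewrite LHS sum
  have stepB : ∑ n ∈ Finset.Icc a b,
      χ (n : ZMod q) * (starRingEnd ℂ) (χ ((n + h : ℤ) : ZMod q))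
      = ∑ d' ∈ d.divisors, (μ d' : ℂ) *
          ∑ n ∈ (Finset.Icc a b).filter (fun n => (d' : ℤ) ∣ n), fe n := by
    calc ∑ n ∈ Finset.Icc a b, χ (n : ZMod q) * (starRingEnd ℂ) (χ ((n + h : ℤ) : ZMod q))
        = ∑ n ∈ Finset.Icc a b, ∑ d' ∈ d.divisors,
            (μ d' : ℂ) * ((if (d' : ℤ) ∣ n then (1:ℂ) else 0) * fe n) := by
          refine Finset.sum_congr rfl fun n _ => ?_
          rw [stepA n, indicator_moebius' d hd0 n, Finset.sum_mul]
          exact Finset.sum_congr rfl fun d' _ => by ring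
      _ = ∑ d' ∈ d.divisors, (μ d' : ℂ) *
            ∑ n ∈ (Finset.Icc a b).filter (fun n => (d' : ℤ) ∣ n), fe n := by
          rw [Finset.sum_comm]
          refine Finset.sum_congr rfl fun d' _ => ?_
          rw [Finset.mul_sum, Finset.sum_filter]
          simp only [ite_mul, one_mul, zero_mul, mul_ite, mul_zero]
  -- Step C: reindex divisible sums
  have stepC : ∀ d' ∈ d.divisors,
      ∑ n ∈ (Finset.Icc a b).filter (fun n => (d' : ℤ) ∣ n), fe n
        = ∑ m ∈ J d', fe ((d' : ℤ) * m) := by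
    intro d' hd'
    have hd'0 : (d' : ℤ) ≠ 0 := by
      exact_mod_cast (Nat.pos_of_mem_divisors hd').ne'
    refine Finset.sum_nbij' (fun n => n / (d' : ℤ)) (fun m => (d' : ℤ) * m) ?_ ?_ ?_ ?_ ?_
    · intro n hn
      rw [Finset.mem_filter] at hn
      rw [hJ d' hd', Int.mul_ediv_cancel' hn.2]
      exact hn.1
    · intro m hm
      rw [Finset.mem_filter]
      exact ⟨(hJ d' hd' m).mp hm, Dvd.intro m rfl⟩
    · intro n hn
      rw [Finset.mem_filter] at hn
      exact Int.mul_ediv_cancel' hn.2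
    · intro m _
      exact Int.mul_ediv_cancel_left m hd'0
    · intro n hn
      rw [Finset.mem_filter] at hn
      rw [Int.mul_ediv_cancel' hn.2]
  -- Step D: fe (d' * m) equals the coprime-shift summand
  have stepD : ∀ d' ∈ d.divisors, ∀ m : ℤ,
      fe ((d' : ℤ) * m)
        = χe (m : ZMod e) *
            (starRingEnd ℂ) (χe ((m : ZMod e) + ((d' : ZMod e))⁻¹ * (h : ZMod e))) := by
    intro d' hd' m
    have hud' : IsUnit ((d' : ZMod e)) := by
      rw [ZMod.isUnit_iff_coprime]
      exact Nat.Coprime.coprime_dvd_left (Nat.dvd_of_mem_divisors hd') hcop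
    have hinv : ((d' : ZMod e)) * ((d' : ZMod e))⁻¹ = 1 := ZMod.mul_inv_of_unit _ hud'
    have hc1 : (((d' : ℤ) * m : ℤ) : ZMod e) = (d' : ZMod e) * (m : ZMod e) := by push_cast; ring
    have hc2 : (((d' : ℤ) * m + h : ℤ) : ZMod e)
        = (d' : ZMod e) * ((m : ZMod e) + ((d' : ZMod e))⁻¹ * (h : ZMod e)) := by
      push_cast
      rw [mul_add, ← mul_assoc, hinv, one_mul]
    rw [hfe]
    simp only
    rw [hc1, hc2, map_mul, map_mul, map_mul]
    have := hnorm1 e χe _ hud'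
    calc χe (d' : ZMod e) * χe (m : ZMod e) *
          ((starRingEnd ℂ) (χe (d' : ZMod e)) *
            (starRingEnd ℂ) (χe ((m : ZMod e) + ((d' : ZMod e))⁻¹ * (h : ZMod e))))
        = (χe (d' : ZMod e) * (starRingEnd ℂ) (χe (d' : ZMod e))) *
            (χe (m : ZMod e) *
              (starRingEnd ℂ) (χe ((m : ZMod e) + ((d' : ZMod e))⁻¹ * (h : ZMod e)))) := by ring
      _ = _ := by rw [this, one_mul]
  -- assemble
  rw [stepB]
  refine le_trans (norm_sum_le _ _) (Finset.sum_le_sum fun d' hd' => ?_)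
  rw [stepC d' hd', Finset.sum_congr rfl (fun m _ => stepD d' hd' m)] 
  rw [norm_mul]
  have hmu : ‖((μ d' : ℤ) : ℂ)‖ ≤ 1 := by
    rw [Complex.norm_intCast]
    exact_mod_cast abs_moebius_le_one
  calc ‖((μ d' : ℤ) : ℂ)‖ * ‖∑ m ∈ J d', χe (m : ZMod e) *
          (starRingEnd ℂ) (χe ((m : ZMod e) + ((d' : ZMod e))⁻¹ * (h : ZMod e)))‖
      ≤ 1 * ‖∑ m ∈ J d', χe (m : ZMod e) *
          (starRingEnd ℂ) (χe ((m : ZMod e) + ((d' : ZMod e))⁻¹ * (h : ZMod e)))‖ := by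
        exact mul_le_mul_of_nonneg_right hmu (norm_nonneg _)
    _ = _ := one_mul _
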